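/- Let A, B, C ⊆ V be nonempty subsets of a multigraph G with A ∩ B = ∅, and let k, ℓ ∈ ℕ. Then there exists a family 𝒳 of subsets of C with |𝒳| ≤ 2^{3(k+ℓ)} such that for every minimal (A,B)-cut (V1, V2) of cut-size at most k with |C ∩ V1| ≤ ℓ, the set C ∩ V1 belongs to 𝒳. -/

import Mathlib

open Finset

variable {V : Type*} [Fintype V] [DecidableEq V]

/-- Cut-size of the cut `(V1, V ∖ V1)`. -/
def cutSize (w : V → V → ℕ) (V1 : Finset V) : ℕ :=
  ∑ u ∈ V1, ∑ v ∈ V1ᶜ, w u v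

/-- Boundary `δ(X)`: unordered pairs `{u,v}` with `u ∈ X`, `v ∉ X`, `w u v > 0`. -/
def bdry (w : V → V → ℕ) (X : Finset V) : Set (Sym2 V) :=
  {e | ∃ u v, e = s(u, v) ∧ u ∈ X ∧ v ∉ X ∧ 0 < w u v}

/-- `(A,B)`-cut, represented by its first part `V1` (the second part is `V1ᶜ`). -/
def IsCut (A B V1 : Finset V) : Prop := A ⊆ V1 ∧ B ⊆ V1ᶜ

/-- Minimal `(A,B)`-cut. -/
def IsMinimalCut (w : V → V → ℕ) (A B V1 : Finset V) : Prop :=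
  IsCut A B V1 ∧
  (¬ ∃ V1' : Finset V, A ⊆ V1' ∧ V1' ⊂ V1 ∧ bdry w V1' ⊆ bdry w V1) ∧
  (¬ ∃ V2' : Finset V, B ⊆ V2' ∧ V2' ⊂ V1ᶜ ∧ bdry w V2' ⊆ bdry w V1)

/-- Minimum `(A,B)`-cut. -/
def IsMinCut (w : V → V → ℕ) (A B V1 : Finset V) : Prop :=
  IsCut A B V1 ∧ ∀ U : Finset V, IsCut A B U → cutSize w V1 ≤ cutSize w U

/-- MM `(A,B)`-cut: minimum cut with `|V1|` maximum among minimum cuts. -/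
def IsMMCut (w : V → V → ℕ) (A B V1 : Finset V) : Prop :=
  IsMinCut w A B V1 ∧ ∀ U : Finset V, IsMinCut w A B U → U.card ≤ V1.card

/-- Important `(A,B)`-cut. -/
def IsImportantCut (w : V → V → ℕ) (A B V1 : Finset V) : Prop :=
  IsMinimalCut w A B V1 ∧
  ¬ ∃ X' : Finset V, IsCut A B X' ∧ V1 ⊂ X' ∧ cutSize w X' ≤ cutSize w V1

/-- Degree of a vertex. -/
def deg (w : V → V → ℕ) (v : V) : ℕ := ∑ u, w v u

/-- `deg(v; X)`: degree of `v` towards `X ∖ {v}`. -/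
def degIn (w : V → V → ℕ) (v : V) (X : Finset V) : ℕ :=
  ∑ u ∈ X.erase v, w v u

/-- Neighborhood `N(X)`. -/
def nbhd (w : V → V → ℕ) (X : Finset V) : Finset V :=
  Finset.univ.filter (fun u => u ∉ X ∧ ∃ x ∈ X, 0 < w u x)

/-- Feasible `(A,B)`-cut for the bounded-degree cut instance `(G,A,B,uA,uB,k)`. -/
def FeasibleCut (w : V → V → ℕ) (uA uB : V → ℕ) (k : ℕ) (A B VA : Finset V) : Prop :=
  IsMinimalCut w A B VA ∧ cutSize w VA ≤ k ∧
  (∀ v ∈ VA, degIn w v VA ≤ uA v) ∧ (∀ v ∈ VAᶜ, degIn w v VAᶜ ≤ uB v)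

/-- Feasibility of the instance `(G,A,B,uA,uB,k)`. -/
def Feasible (w : V → V → ℕ) (uA uB : V → ℕ) (k : ℕ) (A B : Finset V) : Prop :=
  ∃ VA : Finset V, FeasibleCut w uA uB k A B VA

/-- Unsatisfied vertices w.r.t. an upper-bound function `u` : `{v : deg(v) > u v}`. -/
def unsat (w : V → V → ℕ) (u : V → ℕ) : Finset V :=
  Finset.univ.filter (fun v => u v < deg w v)

/-- Easy instance. -/
def EasyInstance (w : V → V → ℕ) (uA uB : V → ℕ) (A B : Finset V) : Prop :=
  unsat w uA ∪ unsat w uB ⊆ A ∪ B ∧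
  nbhd w (unsat w uA ∩ A) ⊆ A ∪ B ∧
  nbhd w (unsat w uB ∩ B) ⊆ A ∪ B

/-- `A_π` for the cut `π = (V1, V1ᶜ)`. -/
def Api (w : V → V → ℕ) (uA uB : V → ℕ) (A V1 : Finset V) : Finset V :=
  A ∪ (unsat w uA ∩ V1) ∪ (unsat w uB ∩ V1) ∪
    (nbhd w (unsat w uA ∩ V1) ∩ V1) ∪ (nbhd w (unsat w uB ∩ V1ᶜ) ∩ V1)

/-- `B_π` for the cut `π = (V1, V1ᶜ)`. -/
def Bpi (w : V → V → ℕ) (uA uB : V → ℕ) (B V1 : Finset V) : Finset V :=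
  B ∪ (unsat w uA ∩ V1ᶜ) ∪ (unsat w uB ∩ V1ᶜ) ∪
    (nbhd w (unsat w uA ∩ V1) ∩ V1ᶜ) ∪ (nbhd w (unsat w uB ∩ V1ᶜ) ∩ V1ᶜ)

set_option linter.unusedSectionVars false
set_option linter.unusedVariables false
section CandAux

variable {V : Type*} [Fintype V] [DecidableEq V]

/-- Edge relation inside a set `U`. -/
def EdgeRel (w : V → V → ℕ) (U : Finset V) (x y : V) : Prop :=
  x ∈ U ∧ y ∈ U ∧ 0 < w x y

/-- Reachability inside `U`. -/
def Reach (w : V → V → ℕ) (U : Finset V) (x y : V) : Prop :=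
  Relation.ReflTransGen (EdgeRel w U) x y

/-- Every vertex of `U` is reachable from `A` inside `U`. -/
def Grounded (w : V → V → ℕ) (A U : Finset V) : Prop :=
  ∀ x ∈ U, ∃ a ∈ A, Reach w U a x

/-- Closure: vertices of `U` reachable from `A` inside `U`. -/
noncomputable def cl (w : V → V → ℕ) (A U : Finset V) : Finset V :=
  @Finset.filter V (fun x => ∃ a ∈ A, Reach w U a x) (Classical.decPred _) U

/-- Minimum cut value. -/
noncomputable def lam (w : V → V → ℕ) (A B : Finset V) : ℕ :=
  sInf {n | ∃ U : Finset V, A ⊆ U ∧ Disjoint U B ∧ cutSize w U = n}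

lemma mem_cl {w : V → V → ℕ} {A U : Finset V} {x : V} :
    x ∈ cl w A U ↔ x ∈ U ∧ ∃ a ∈ A, Reach w U a x := by
  simp [cl, Finset.mem_filter]

lemma cl_subset (w : V → V → ℕ) (A U : Finset V) : cl w A U ⊆ U :=
  fun _ hx => (mem_cl.1 hx).1

lemma reach_mono {w w' : V → V → ℕ} {U U' : Finset V} {a x : V}
    (h : ∀ p q, EdgeRel w U p q → EdgeRel w' U' p q) (hr : Reach w U a x) :
    Reach w' U' a x :=
  Relation.ReflTransGen.mono h a x hr

lemma reach_mem {w : V → V → ℕ} {U : Finset V} {a x : V} (ha : a ∈ U)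
    (hr : Reach w U a x) : x ∈ U := by
  induction hr with
  | refl => exact ha
  | tail _ h _ => exact h.2.1

lemma A_subset_cl {w : V → V → ℕ} {A U : Finset V} (hA : A ⊆ U) : A ⊆ cl w A U := by
  intro a ha
  exact mem_cl.2 ⟨hA ha, a, ha, Relation.ReflTransGen.refl⟩

lemma reach_in_cl {w : V → V → ℕ} {A U : Finset V} {a x : V} (ha : a ∈ A) (haU : a ∈ U)
    (hr : Reach w U a x) : Reach w (cl w A U) a x := by
  induction hr with
  | refl => exact Relation.ReflTransGen.refl
  | @tail b c hab hbc ih =>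
      refine ih.tail ⟨?_, ?_, hbc.2.2⟩
      · exact mem_cl.2 ⟨hbc.1, a, ha, hab⟩
      · exact mem_cl.2 ⟨hbc.2.1, a, ha, hab.tail hbc⟩

lemma grounded_cl {w : V → V → ℕ} {A U : Finset V} (hA : A ⊆ U) :
    Grounded w A (cl w A U) := by
  intro x hx
  obtain ⟨hxU, a, ha, hr⟩ := mem_cl.1 hx
  exact ⟨a, ha, reach_in_cl ha (hA ha) hr⟩

lemma subset_cl {w : V → V → ℕ} {A U : Finset V} (hg : Grounded w A U) :
    U ⊆ cl w A U := by
  intro x hx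
  obtain ⟨a, ha, hr⟩ := hg x hx
  exact mem_cl.2 ⟨hx, a, ha, hr⟩

lemma grounded_union {w : V → V → ℕ} {A U1 U2 : Finset V}
    (h1 : Grounded w A U1) (h2 : Grounded w A U2) : Grounded w A (U1 ∪ U2) := by
  intro x hx
  rcases Finset.mem_union.1 hx with hx1 | hx2
  · obtain ⟨a, ha, hr⟩ := h1 x hx1
    exact ⟨a, ha, reach_mono (fun p q hpq => ⟨Finset.mem_union_left _ hpq.1,
      Finset.mem_union_left _ hpq.2.1, hpq.2.2⟩) hr⟩
  · obtain ⟨a, ha, hr⟩ := h2 x hx2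
    exact ⟨a, ha, reach_mono (fun p q hpq => ⟨Finset.mem_union_right _ hpq.1,
      Finset.mem_union_right _ hpq.2.1, hpq.2.2⟩) hr⟩

lemma cutSize_eq (w : V → V → ℕ) (X : Finset V) :
    cutSize w X = ∑ u : V, ∑ v : V, if u ∈ X ∧ v ∉ X then w u v else 0 := by
  unfold cutSize
  have : ∀ u : V, (∑ v : V, if u ∈ X ∧ v ∉ X then w u v else 0)
      = if u ∈ X then (∑ v ∈ Xᶜ, w u v) else 0 := by
    intro u
    by_cases hu : u ∈ X
    · simp only [hu, true_and, if_true]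
      calc (∑ v : V, if v ∉ X then w u v else 0)
          = ∑ v : V, if v ∈ Xᶜ then w u v else 0 := by
            refine Finset.sum_congr rfl fun v _ => by simp [Finset.mem_compl]
        _ = ∑ v ∈ Finset.univ ∩ Xᶜ, w u v := Finset.sum_ite_mem _ _ _
        _ = ∑ v ∈ Xᶜ, w u v := by rw [Finset.univ_inter]
    · simp [hu]
  rw [Finset.sum_congr rfl fun u _ => this u, Finset.sum_ite_mem Finset.univ X, Finset.univ_inter]

lemma single_le_cutSize {w : V → V → ℕ} {X : Finset V} {u v : V}
    (hu : u ∈ X) (hv : v ∉ X) : w u v ≤ cutSize w X := by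
  unfold cutSize
  calc w u v ≤ ∑ y ∈ Xᶜ, w u y :=
        Finset.single_le_sum (fun y _ => Nat.zero_le _) (Finset.mem_compl.2 hv)
    _ ≤ ∑ x ∈ X, ∑ y ∈ Xᶜ, w x y :=
        Finset.single_le_sum (f := fun x => ∑ y ∈ Xᶜ, w x y) (fun x _ => Nat.zero_le _) hu

lemma cutSize_cl_le {w : V → V → ℕ} {A U : Finset V} : cutSize w (cl w A U) ≤ cutSize w U := by
  rw [cutSize_eq, cutSize_eq]
  refine Finset.sum_le_sum fun u _ => Finset.sum_le_sum fun v _ => ?_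
  by_cases h : u ∈ cl w A U ∧ v ∉ cl w A U
  · rw [if_pos h]
    obtain ⟨hucl, hvcl⟩ := h
    have huU : u ∈ U := cl_subset w A U hucl
    by_cases hvU : v ∈ U
    · -- then w u v = 0, else v would be in cl
      by_cases hw : 0 < w u v
      · exfalso
        obtain ⟨hu', a, ha, hr⟩ := mem_cl.1 hucl
        exact hvcl (mem_cl.2 ⟨hvU, a, ha, hr.tail ⟨huU, hvU, hw⟩⟩)
      · omega
    · rw [if_pos ⟨huU, hvU⟩]
  · rw [if_neg h]
    exact Nat.zero_le _

lemma cutSize_submod (w : V → V → ℕ) (X Y : Finset V) :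
    cutSize w (X ∪ Y) + cutSize w (X ∩ Y) ≤ cutSize w X + cutSize w Y := by
  simp only [cutSize_eq]
  rw [← Finset.sum_add_distrib, ← Finset.sum_add_distrib]
  refine Finset.sum_le_sum fun u _ => ?_
  rw [← Finset.sum_add_distrib, ← Finset.sum_add_distrib]
  refine Finset.sum_le_sum fun v _ => ?_
  by_cases hux : u ∈ X <;> by_cases huy : u ∈ Y <;> by_cases hvx : v ∈ X <;>
    by_cases hvy : v ∈ Y <;>
    simp [hux, huy, hvx, hvy, Finset.mem_union, Finset.mem_inter]

end CandAux
section CandAux2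

set_option linter.unusedSectionVars false
set_option linter.unusedVariables false

variable {V : Type*} [Fintype V] [DecidableEq V]

lemma lam_le {w : V → V → ℕ} {A B U : Finset V} (hU : A ⊆ U) (hUB : Disjoint U B) :
    lam w A B ≤ cutSize w U :=
  Nat.sInf_le ⟨U, hU, hUB, rfl⟩

lemma cuts_nonempty {A B : Finset V} (hAB : Disjoint A B) (w : V → V → ℕ) :
    {n | ∃ U : Finset V, A ⊆ U ∧ Disjoint U B ∧ cutSize w U = n}.Nonempty := by
  refine ⟨cutSize w Bᶜ, Bᶜ, ?_, ?_, rfl⟩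
  · intro a ha
    exact Finset.mem_compl.2 fun hb => (Finset.disjoint_left.1 hAB) ha hb
  · simp [Finset.disjoint_left]

lemma exists_lam_cut {A B : Finset V} (hAB : Disjoint A B) (w : V → V → ℕ) :
    ∃ U : Finset V, A ⊆ U ∧ Disjoint U B ∧ cutSize w U = lam w A B :=
  Nat.sInf_mem (cuts_nonempty hAB w)

lemma le_lam {w : V → V → ℕ} {A B : Finset V} {m : ℕ} (hAB : Disjoint A B)
    (h : ∀ U : Finset V, A ⊆ U → Disjoint U B → m ≤ cutSize w U) : m ≤ lam w A B := by
  refine le_csInf (cuts_nonempty hAB w) ?_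
  rintro n ⟨U, hU, hUB, rfl⟩
  exact h U hU hUB

/-- Existence of the maximal grounded minimum cut. -/
lemma exists_R (w : V → V → ℕ) {A B : Finset V} (hAB : Disjoint A B) :
    ∃ R : Finset V, A ⊆ R ∧ Disjoint R B ∧ Grounded w A R ∧ cutSize w R = lam w A B ∧
      ∀ U : Finset V, A ⊆ U → Disjoint U B → Grounded w A U →
        cutSize w U = lam w A B → U ⊆ R := by
  classical
  set P : Finset V → Prop := fun U =>
    A ⊆ U ∧ Disjoint U B ∧ Grounded w A U ∧ cutSize w U = lam w A B with hP
  set F : Finset (Finset V) := Finset.univ.filter P with hF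
  have memF : ∀ U, U ∈ F ↔ P U := by
    intro U; simp [hF]
  have hne : F.Nonempty := by
    obtain ⟨U, hU, hUB, hsz⟩ := exists_lam_cut hAB w
    refine ⟨cl w A U, (memF _).2 ⟨A_subset_cl hU, ?_, grounded_cl hU, ?_⟩⟩
    · exact Finset.disjoint_of_subset_left (cl_subset w A U) hUB
    · refine le_antisymm (hsz ▸ cutSize_cl_le) (lam_le (A_subset_cl hU)
        (Finset.disjoint_of_subset_left (cl_subset w A U) hUB))
  refine ⟨F.sup' hne id, ?_⟩
  have hPsup : P (F.sup' hne id) := by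
    refine Finset.sup'_induction hne id ?_ ?_
    · rintro U1 ⟨h1A, h1B, h1g, h1s⟩ U2 ⟨h2A, h2B, h2g, h2s⟩
      rw [Finset.sup_eq_union]
      have hcut : A ⊆ U1 ∩ U2 := Finset.subset_inter h1A h2A
      have hcutB : Disjoint (U1 ∩ U2) B :=
        Finset.disjoint_of_subset_left Finset.inter_subset_left h1B
      have hUB : Disjoint (U1 ∪ U2) B := Finset.disjoint_union_left.2 ⟨h1B, h2B⟩
      have hsub := cutSize_submod w U1 U2
      have h1 : lam w A B ≤ cutSize w (U1 ∪ U2) :=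
        lam_le (h1A.trans Finset.subset_union_left) hUB
      have h2 : lam w A B ≤ cutSize w (U1 ∩ U2) := lam_le hcut hcutB
      refine ⟨h1A.trans Finset.subset_union_left, hUB, grounded_union h1g h2g, ?_⟩
      omega
    · intro U hU; exact (memF U).1 hU
  obtain ⟨hRA, hRB, hRg, hRs⟩ := hPsup
  refine ⟨hRA, hRB, hRg, hRs, ?_⟩
  intro U hU1 hU2 hU3 hU4
  exact Finset.le_sup' (f := id) ((memF U).2 ⟨hU1, hU2, hU3, hU4⟩)

/-- Key pushing lemma: any cut containing `R ∪ {v}` costs at least `lam + 1`. -/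
lemma lam_push {w : V → V → ℕ} {A B R : Finset V} (hAB : Disjoint A B)
    (hRA : A ⊆ R) (hRB : Disjoint R B) (hRg : Grounded w A R)
    (hRs : cutSize w R = lam w A B)
    (hRmax : ∀ U : Finset V, A ⊆ U → Disjoint U B → Grounded w A U →
      cutSize w U = lam w A B → U ⊆ R)
    {u v : V} (hu : u ∈ R) (hv : v ∉ R) (huv : 0 < w u v) :
    ∀ U : Finset V, R ⊆ U → v ∈ U → Disjoint U B → lam w A B + 1 ≤ cutSize w U := by
  intro U hRU hvU hUB
  by_contra hlt
  push_neg at hlt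
  have hge : lam w A B ≤ cutSize w U := lam_le (hRA.trans hRU) hUB
  have heq : cutSize w U = lam w A B := by omega
  -- closure of U is a grounded min cut, hence inside R
  have hAU : A ⊆ U := hRA.trans hRU
  have hclB : Disjoint (cl w A U) B := Finset.disjoint_of_subset_left (cl_subset w A U) hUB
  have hclsz : cutSize w (cl w A U) = lam w A B :=
    le_antisymm (heq ▸ cutSize_cl_le) (lam_le (A_subset_cl hAU) hclB)
  have hclR : cl w A U ⊆ R :=
    hRmax _ (A_subset_cl hAU) hclB (grounded_cl hAU) hclsz
  -- u is in the closure
  obtain ⟨a, ha, hra⟩ := hRg u hu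
  have hrU : Reach w U a u :=
    reach_mono (fun p q hpq => ⟨hRU hpq.1, hRU hpq.2.1, hpq.2.2⟩) hra
  have hucl : u ∈ cl w A U := mem_cl.2 ⟨hRU hu, a, ha, hrU⟩
  have hvcl : v ∈ cl w A U := mem_cl.2 ⟨hvU, a, ha, hrU.tail ⟨hRU hu, hvU, huv⟩⟩
  exact hv (hclR hvcl)

/-- Sum of a function supported on the two ordered pairs `(u,v),(v,u)`. -/
lemma sum_pair_support {g : V → V → ℕ} {u v : V} (huv : u ≠ v)
    (h : ∀ x y, g x y ≠ 0 → (x = u ∧ y = v) ∨ (x = v ∧ y = u)) :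
    ∑ x : V, ∑ y : V, g x y = g u v + g v u := by
  classical
  have hrow : ∀ x : V, x ≠ u → x ≠ v → ∑ y : V, g x y = 0 := by
    intro x hxu hxv
    refine Finset.sum_eq_zero fun y _ => ?_
    by_contra hne
    rcases h x y hne with ⟨h1, _⟩ | ⟨h1, _⟩ <;> [exact hxu h1; exact hxv h1]
  have hu' : ∑ y : V, g u y = g u v := by
    refine Finset.sum_eq_single v (fun y _ hy => ?_) (fun h => (h (Finset.mem_univ v)).elim)
    by_contra hne
    rcases h u y hne with ⟨_, h2⟩ | ⟨h1, _⟩ <;> [exact hy h2; exact huv h1]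
  have hv' : ∑ y : V, g v y = g v u := by
    refine Finset.sum_eq_single u (fun y _ hy => ?_) (fun h => (h (Finset.mem_univ u)).elim)
    by_contra hne
    rcases h v y hne with ⟨h1, _⟩ | ⟨_, h2⟩ <;> [exact huv h1.symm; exact hy h2]
  calc ∑ x : V, ∑ y : V, g x y
      = ∑ x ∈ ({u, v} : Finset V), ∑ y : V, g x y := by
        refine (Finset.sum_subset (Finset.subset_univ _) fun x _ hx => ?_).symm
        simp only [Finset.mem_insert, Finset.mem_singleton] at hx
        push_neg at hx
        exact hrow x hx.1 hx.2
    _ = (∑ y : V, g u y) + ∑ y : V, g v y := Finset.sum_pair huv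
    _ = g u v + g v u := by rw [hu', hv']

end CandAux2
section CandAux3

set_option linter.unusedSectionVars false
set_option linter.unusedVariables false
set_option maxHeartbeats 1000000

variable {V : Type*} [Fintype V] [DecidableEq V]

/-- Main covering lemma: a family of at most `2^n` sets covering (from above) all
grounded cuts of cut-size at most `κ`, provided `2κ ≤ n + λ(A,B)`. -/
lemma cover : ∀ (n : ℕ) (w : V → V → ℕ), (∀ a b, w a b = w b a) →
    ∀ (κ : ℕ) (A B : Finset V), Disjoint A B → 2 * κ ≤ n + lam w A B →
    ∃ 𝒲 : Finset (Finset V), 𝒲.card ≤ 2 ^ n ∧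
      (∀ W ∈ 𝒲, Disjoint W B ∧ cutSize w W ≤ κ) ∧
      (∀ V1 : Finset V, A ⊆ V1 → Disjoint V1 B → Grounded w A V1 → cutSize w V1 ≤ κ →
        ∃ W ∈ 𝒲, V1 ⊆ W) := by
  intro n
  induction n using Nat.strong_induction_on with
  | _ n ih =>
  intro w sym κ A B hAB hmeas
  by_cases hlk : lam w A B ≤ κ
  swap
  · refine ⟨∅, by simp, by simp, fun V1 h1 h2 h3 h4 => ?_⟩
    exact absurd ((lam_le h1 h2).trans h4) hlk
  obtain ⟨R, hRA, hRB, hRg, hRs, hRmax⟩ := exists_R w hAB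
  by_cases hbase : ∀ x ∈ R, ∀ y, y ∉ R → w x y = 0
  · -- base case: no edge leaves R; then every grounded cut is inside R
    refine ⟨{R}, by simpa using Nat.one_le_two_pow, ?_, ?_⟩
    · intro W hW
      rw [Finset.mem_singleton] at hW; subst hW
      exact ⟨hRB, hRs ▸ hlk⟩
    · intro V1 h1 h2 h3 h4
      refine ⟨R, Finset.mem_singleton_self R, fun x hx => ?_⟩
      obtain ⟨a, ha, hr⟩ := h3 x hx
      clear hx h4
      induction hr with
      | refl => exact hRA ha
      | tail hab hbc ih2 =>
          by_contra hc
          have h0 := hbase _ ih2 _ hc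
          have h1' := hbc.2.2
          omega
  · -- branching case
    push_neg at hbase
    obtain ⟨u, hu, v, hv, hw0⟩ := hbase
    have hwpos : 0 < w u v := Nat.pos_of_ne_zero hw0
    have huvne : u ≠ v := by rintro rfl; exact hv hu
    have hwlam : w u v ≤ lam w A B := hRs ▸ single_le_cutSize hu hv
    have hn : n ≠ 0 := by rintro rfl; omega
    obtain ⟨m, rfl⟩ : ∃ m, n = m + 1 := ⟨n - 1, by omega⟩
    -- the pushing step
    have push : ∀ V1 : Finset V, A ⊆ V1 → Disjoint V1 B → Grounded w A V1 →
        cutSize w V1 ≤ κ → ∃ V1' : Finset V, V1 ⊆ V1' ∧ R ⊆ V1' ∧ Disjoint V1' B ∧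
          Grounded w A V1' ∧ cutSize w V1' ≤ κ := by
      intro V1 h1 h2 h3 h4
      have hAsub : A ⊆ V1 ∪ R := h1.trans Finset.subset_union_left
      have hdisj : Disjoint (V1 ∪ R) B := Finset.disjoint_union_left.2 ⟨h2, hRB⟩
      refine ⟨cl w A (V1 ∪ R), ?_, ?_, ?_, grounded_cl hAsub, ?_⟩
      · intro x hx
        obtain ⟨a, ha, hr⟩ := h3 x hx
        exact mem_cl.2 ⟨Finset.mem_union_left _ hx, a, ha,
          reach_mono (fun p q hpq => ⟨Finset.mem_union_left _ hpq.1,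
            Finset.mem_union_left _ hpq.2.1, hpq.2.2⟩) hr⟩
      · intro x hx
        obtain ⟨a, ha, hr⟩ := hRg x hx
        exact mem_cl.2 ⟨Finset.mem_union_right _ hx, a, ha,
          reach_mono (fun p q hpq => ⟨Finset.mem_union_right _ hpq.1,
            Finset.mem_union_right _ hpq.2.1, hpq.2.2⟩) hr⟩
      · exact Finset.disjoint_of_subset_left (cl_subset _ _ _) hdisj
      · have hsub := cutSize_submod w V1 R
        have hintcut : lam w A B ≤ cutSize w (V1 ∩ R) :=
          lam_le (Finset.subset_inter h1 hRA)
            (Finset.disjoint_of_subset_left Finset.inter_subset_left h2)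
        have hcl : cutSize w (cl w A (V1 ∪ R)) ≤ cutSize w (V1 ∪ R) := cutSize_cl_le
        omega
    -- branch 2: delete the edge (u,v)
    set w2 : V → V → ℕ := fun x y =>
      if (x = u ∧ y = v) ∨ (x = v ∧ y = u) then 0 else w x y with hw2
    have sym2 : ∀ a b, w2 a b = w2 b a := by
      intro a b
      simp only [hw2]
      by_cases h : (a = u ∧ b = v) ∨ (a = v ∧ b = u)
      · rw [if_pos h, if_pos (by tauto)]
      · rw [if_neg h, if_neg (by tauto), sym a b]
    have hdel : ∀ X : Finset V, cutSize w X = cutSize w2 X +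
        ((if u ∈ X ∧ v ∉ X then w u v else 0) + (if v ∈ X ∧ u ∉ X then w u v else 0)) := by
      intro X
      set gX : V → V → ℕ := fun x y => if x ∈ X ∧ y ∉ X then
        (if (x = u ∧ y = v) ∨ (x = v ∧ y = u) then w x y else 0) else 0 with hgX
      have hsupp : ∀ x y, gX x y ≠ 0 → (x = u ∧ y = v) ∨ (x = v ∧ y = u) := by
        intro x y hxy
        simp only [hgX] at hxy
        by_cases h1 : x ∈ X ∧ y ∉ X
        · rw [if_pos h1] at hxy
          by_cases h2 : (x = u ∧ y = v) ∨ (x = v ∧ y = u)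
          · exact h2
          · rw [if_neg h2] at hxy; omega
        · rw [if_neg h1] at hxy; omega
      have hsplit : ∀ x y : V, (if x ∈ X ∧ y ∉ X then w x y else 0) =
          (if x ∈ X ∧ y ∉ X then w2 x y else 0) + gX x y := by
        intro x y
        by_cases hxy : x ∈ X ∧ y ∉ X
        · by_cases hp : (x = u ∧ y = v) ∨ (x = v ∧ y = u) <;>
            simp [hxy, hp, hw2, hgX]
        · simp [hxy, hgX]
      have hg1 : gX u v = if u ∈ X ∧ v ∉ X then w u v else 0 := by
        by_cases h : u ∈ X ∧ v ∉ X <;> simp [hgX, h]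
      have hg2 : gX v u = if v ∈ X ∧ u ∉ X then w u v else 0 := by
        by_cases h : v ∈ X ∧ u ∉ X <;> simp [hgX, h, sym u v]
      calc cutSize w X = ∑ x : V, ∑ y : V, (if x ∈ X ∧ y ∉ X then w x y else 0) :=
            cutSize_eq w X
        _ = ∑ x : V, ∑ y : V, ((if x ∈ X ∧ y ∉ X then w2 x y else 0) + gX x y) :=
            Finset.sum_congr rfl fun x _ => Finset.sum_congr rfl fun y _ => hsplit x y
        _ = (∑ x : V, ∑ y : V, (if x ∈ X ∧ y ∉ X then w2 x y else 0)) +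
              ∑ x : V, ∑ y : V, gX x y := by
            rw [← Finset.sum_add_distrib]
            exact Finset.sum_congr rfl fun x _ => Finset.sum_add_distrib
        _ = cutSize w2 X + (gX u v + gX v u) := by
            rw [← cutSize_eq, sum_pair_support huvne hsupp]
        _ = _ := by rw [hg1, hg2]
    have hdel_le : ∀ X : Finset V, cutSize w X ≤ cutSize w2 X + w u v := by
      intro X
      have := hdel X
      by_cases h1 : u ∈ X ∧ v ∉ X <;> by_cases h2 : v ∈ X ∧ u ∉ X
      · exact absurd h1.1 h2.2
      all_goals simp [h1, h2] at this; omega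
    have hlam2 : lam w A B ≤ lam w2 A B + w u v := by
      obtain ⟨U, hU1, hU2, hU3⟩ := exists_lam_cut hAB w2
      have h1 := lam_le (w := w) hU1 hU2
      have h2 := hdel_le U
      omega
    have hmeas2 : 2 * (κ - w u v) ≤ m + lam w2 A B := by omega
    obtain ⟨W2, hW2card, hW2inv, hW2cov⟩ :=
      ih m (by omega) w2 sym2 (κ - w u v) A B hAB hmeas2
    have hW2inv' : ∀ W ∈ W2, Disjoint W B ∧ cutSize w W ≤ κ := by
      intro W hW
      obtain ⟨hd1, hd2⟩ := hW2inv W hW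
      exact ⟨hd1, le_trans (hdel_le W) (by omega)⟩
    -- covering from branch 2, valid whenever v ∉ V1'
    have cov2 : ∀ V1' : Finset V, A ⊆ V1' → Disjoint V1' B → Grounded w A V1' →
        cutSize w V1' ≤ κ → R ⊆ V1' → v ∉ V1' → ∃ W ∈ W2, V1' ⊆ W := by
      intro V1' h1 h2 h3 h4 hR hv'
      have hG2 : Grounded w2 A V1' := by
        intro x hx
        obtain ⟨a, ha, hr⟩ := h3 x hx
        refine ⟨a, ha, reach_mono (fun p q hpq => ⟨hpq.1, hpq.2.1, ?_⟩) hr⟩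
        have hne : ¬((p = u ∧ q = v) ∨ (p = v ∧ q = u)) := by
          rintro (⟨rfl, rfl⟩ | ⟨rfl, rfl⟩)
          · exact hv' hpq.2.1
          · exact hv' hpq.1
        simpa only [hw2, if_neg hne] using hpq.2.2
      have hc2 : cutSize w2 V1' ≤ κ - w u v := by
        have := hdel V1'
        rw [if_pos ⟨hR hu, hv'⟩] at this
        have h0 : (if v ∈ V1' ∧ u ∉ V1' then w u v else 0) = 0 := by
          rw [if_neg]; rintro ⟨hvv, -⟩; exact hv' hvv
        omega
      exact hW2cov V1' h1 h2 hG2 hc2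
    by_cases hvB : v ∈ B
    · -- only branch 2 is possible
      refine ⟨W2, le_trans hW2card (Nat.pow_le_pow_right (by norm_num) (Nat.le_succ m)), hW2inv', ?_⟩
      intro V1 h1 h2 h3 h4
      obtain ⟨V1', hsub, hR, hd, hg, hc⟩ := push V1 h1 h2 h3 h4
      have hv' : v ∉ V1' := fun hmem => (Finset.disjoint_left.1 hd) hmem hvB
      obtain ⟨W, hW, hWsub⟩ := cov2 V1' (h1.trans hsub) hd hg hc hR hv'
      exact ⟨W, hW, hsub.trans hWsub⟩
    · -- branch 1: add v to the source side
      have hA'B : Disjoint (R ∪ {v}) B := by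
        refine Finset.disjoint_union_left.2 ⟨hRB, ?_⟩
        simp [Finset.disjoint_left, hvB]
      have hlam1 : lam w A B + 1 ≤ lam w (R ∪ {v}) B := by
        refine le_lam hA'B fun U hU1 hU2 => ?_
        exact lam_push hAB hRA hRB hRg hRs hRmax hu hv hwpos U
          ((Finset.subset_union_left).trans hU1)
          (hU1 (Finset.mem_union_right _ (Finset.mem_singleton_self v))) hU2
      have hmeas1 : 2 * κ ≤ m + lam w (R ∪ {v}) B := by omega
      obtain ⟨W1, hW1card, hW1inv, hW1cov⟩ :=
        ih m (by omega) w sym κ (R ∪ {v}) B hA'B hmeas1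
      refine ⟨W1 ∪ W2, ?_, ?_, ?_⟩
      · calc (W1 ∪ W2).card ≤ W1.card + W2.card := Finset.card_union_le _ _
          _ ≤ 2 ^ m + 2 ^ m := Nat.add_le_add hW1card hW2card
          _ = 2 ^ (m + 1) := by ring
      · intro W hW
        rcases Finset.mem_union.1 hW with h | h
        · exact hW1inv W h
        · exact hW2inv' W h
      · intro V1 h1 h2 h3 h4
        obtain ⟨V1', hsub, hR, hd, hg, hc⟩ := push V1 h1 h2 h3 h4
        by_cases hv' : v ∈ V1'
        · have hA'sub : R ∪ {v} ⊆ V1' := by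
            refine Finset.union_subset hR ?_
            simpa using hv'
          have hg' : Grounded w (R ∪ {v}) V1' := by
            intro x hx
            obtain ⟨a, ha, hr⟩ := hg x hx
            exact ⟨a, Finset.mem_union_left _ (hRA ha), hr⟩
          obtain ⟨W, hW, hWsub⟩ := hW1cov V1' hA'sub hd hg' hc
          exact ⟨W, Finset.mem_union_left _ hW, hsub.trans hWsub⟩
        · obtain ⟨W, hW, hWsub⟩ := cov2 V1' (h1.trans hsub) hd hg hc hR hv'
          exact ⟨W, Finset.mem_union_right _ hW, hsub.trans hWsub⟩

end CandAux3
set_option linter.unusedSectionVars false in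
set_option maxHeartbeats 1000000 in
/-- candidate sets for `C ∩ V1` over minimal `(A,B)`-cuts of size `≤ k`
with `|C ∩ V1| ≤ ℓ`. -/
theorem candidate_sets_one (w : V → V → ℕ)
    (hsymm : ∀ u v, w u v = w v u) (hloop : ∀ v, w v v = 0)
    (A B C : Finset V) (hA : A.Nonempty) (hB : B.Nonempty) (hC : C.Nonempty)
    (hAB : Disjoint A B) (k l : ℕ) :
    ∃ 𝒳 : Finset (Finset V), 𝒳.card ≤ 2 ^ (3 * (k + l)) ∧ (∀ X ∈ 𝒳, X ⊆ C) ∧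
      ∀ V1 : Finset V, IsMinimalCut w A B V1 → cutSize w V1 ≤ k →
        (C ∩ V1).card ≤ l → C ∩ V1 ∈ 𝒳 := by
  classical
  obtain ⟨b0, hb0⟩ := hB
  set w' : V → V → ℕ := fun x y =>
    w x y + ((if x ∈ C ∧ y = b0 ∧ x ≠ b0 then 1 else 0) +
             (if y ∈ C ∧ x = b0 ∧ y ≠ b0 then 1 else 0)) with hw'
  have hle : ∀ x y, w x y ≤ w' x y := by
    intro x y; simp only [hw']; omega
  have sym' : ∀ a b, w' a b = w' b a := by
    intro a b
    simp only [hw']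
    rw [hsymm a b]
    ring
  -- minimal cuts are grounded
  have hground : ∀ V1 : Finset V, IsMinimalCut w A B V1 → Grounded w A V1 := by
    rintro V1 ⟨⟨hAV, hBV⟩, hmin, -⟩
    by_contra hng
    rw [Grounded] at hng
    push_neg at hng
    obtain ⟨x, hx, hnx⟩ := hng
    apply hmin
    refine ⟨cl w A V1, A_subset_cl hAV, ?_, ?_⟩
    · refine (Finset.ssubset_iff_of_subset (cl_subset w A V1)).2 ⟨x, hx, ?_⟩
      intro hxc
      obtain ⟨-, a, ha, hr⟩ := mem_cl.1 hxc
      exact hnx a ha hr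
    · rintro e ⟨p, q, rfl, hp, hq, hwpq⟩
      refine ⟨p, q, rfl, cl_subset w A V1 hp, ?_, hwpq⟩
      intro hqV1
      obtain ⟨hpV, a, ha, hr⟩ := mem_cl.1 hp
      exact hq (mem_cl.2 ⟨hqV1, a, ha, hr.tail ⟨hpV, hqV1, hwpq⟩⟩)
  -- cut-size under the augmented weights
  have hcs' : ∀ V1 : Finset V, b0 ∉ V1 →
      cutSize w' V1 ≤ cutSize w V1 + (C ∩ V1).card := by
    intro V1 hb0V
    have hexp : cutSize w' V1 = cutSize w V1 +
        ∑ x ∈ V1, ∑ y ∈ V1ᶜ, ((if x ∈ C ∧ y = b0 ∧ x ≠ b0 then 1 else 0) +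
          (if y ∈ C ∧ x = b0 ∧ y ≠ b0 then 1 else 0)) := by
      unfold cutSize
      rw [← Finset.sum_add_distrib]
      refine Finset.sum_congr rfl fun x hx => ?_
      rw [← Finset.sum_add_distrib]
    rw [hexp]
    have hbound : ∑ x ∈ V1, ∑ y ∈ V1ᶜ, ((if x ∈ C ∧ y = b0 ∧ x ≠ b0 then 1 else 0) +
        (if y ∈ C ∧ x = b0 ∧ y ≠ b0 then 1 else 0)) ≤ (C ∩ V1).card := by
      have hinner : ∀ x ∈ V1, (∑ y ∈ V1ᶜ, ((if x ∈ C ∧ y = b0 ∧ x ≠ b0 then 1 else 0) +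
          (if y ∈ C ∧ x = b0 ∧ y ≠ b0 then 1 else 0))) ≤ (if x ∈ C then 1 else 0) := by
        intro x hxV
        have hxb0 : x ≠ b0 := by rintro rfl; exact hb0V hxV
        have h2 : ∀ y ∈ V1ᶜ, (if y ∈ C ∧ x = b0 ∧ y ≠ b0 then 1 else 0) = 0 := by
          intro y hy
          rw [if_neg]; rintro ⟨-, rfl, -⟩; exact hb0V hxV
        by_cases hxC : x ∈ C
        · calc (∑ y ∈ V1ᶜ, ((if x ∈ C ∧ y = b0 ∧ x ≠ b0 then 1 else 0) +
                (if y ∈ C ∧ x = b0 ∧ y ≠ b0 then 1 else 0)))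
              = ∑ y ∈ V1ᶜ, (if y = b0 then 1 else 0) := by
                refine Finset.sum_congr rfl fun y hy => ?_
                rw [h2 y hy, Nat.add_zero]
                by_cases hyb : y = b0 <;> simp [hyb, hxC, hxb0]
            _ = if b0 ∈ V1ᶜ then 1 else 0 := Finset.sum_ite_eq' _ _ _
            _ ≤ if x ∈ C then 1 else 0 := by
                rw [if_pos hxC]
                split <;> norm_num
        · calc (∑ y ∈ V1ᶜ, ((if x ∈ C ∧ y = b0 ∧ x ≠ b0 then 1 else 0) +
                (if y ∈ C ∧ x = b0 ∧ y ≠ b0 then 1 else 0)))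
              = ∑ y ∈ V1ᶜ, 0 := by
                refine Finset.sum_congr rfl fun y hy => ?_
                rw [h2 y hy, Nat.add_zero, if_neg]
                rintro ⟨hc, -, -⟩; exact hxC hc
            _ ≤ if x ∈ C then 1 else 0 := by simp
      calc ∑ x ∈ V1, ∑ y ∈ V1ᶜ, ((if x ∈ C ∧ y = b0 ∧ x ≠ b0 then 1 else 0) +
            (if y ∈ C ∧ x = b0 ∧ y ≠ b0 then 1 else 0))
          ≤ ∑ x ∈ V1, (if x ∈ C then 1 else 0) := Finset.sum_le_sum hinner
        _ = ∑ x ∈ V1 ∩ C, 1 := Finset.sum_ite_mem _ _ _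
        _ = (C ∩ V1).card := by rw [Finset.sum_const, smul_eq_mul, Nat.mul_one, Finset.inter_comm]
    omega
  -- apply the covering lemma with budget k + l
  obtain ⟨𝒲, hWcard, hWinv, hWcov⟩ :=
    cover (2 * (k + l)) w' sym' (k + l) A B hAB (by omega)
  have hCW : ∀ W ∈ 𝒲, (C ∩ W).card ≤ k + l := by
    intro W hW
    obtain ⟨hWB, hWs⟩ := hWinv W hW
    have hb0W : b0 ∉ W := fun h => Finset.disjoint_left.1 hWB h hb0
    calc (C ∩ W).card = ∑ _x ∈ C ∩ W, 1 := by simp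
      _ ≤ ∑ x ∈ C ∩ W, w' x b0 := by
          refine Finset.sum_le_sum fun x hx => ?_
          obtain ⟨hxC, hxW⟩ := Finset.mem_inter.1 hx
          have hxb0 : x ≠ b0 := by rintro rfl; exact hb0W hxW
          have h1 : w' x b0 = w x b0 +
              ((if x ∈ C ∧ b0 = b0 ∧ x ≠ b0 then 1 else 0) +
               (if b0 ∈ C ∧ x = b0 ∧ b0 ≠ b0 then 1 else 0)) := rfl
          rw [h1, if_pos (show x ∈ C ∧ b0 = b0 ∧ x ≠ b0 from ⟨hxC, rfl, hxb0⟩)]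
          omega
      _ ≤ ∑ x ∈ C ∩ W, ∑ y ∈ Wᶜ, w' x y := by
          refine Finset.sum_le_sum fun x hx => ?_
          exact Finset.single_le_sum (fun y _ => Nat.zero_le _) (Finset.mem_compl.2 hb0W)
      _ ≤ ∑ x ∈ W, ∑ y ∈ Wᶜ, w' x y :=
          Finset.sum_le_sum_of_subset Finset.inter_subset_right
      _ = cutSize w' W := rfl
      _ ≤ k + l := hWs
  refine ⟨𝒲.biUnion fun W => (C ∩ W).powerset, ?_, ?_, ?_⟩
  · calc (𝒲.biUnion fun W => (C ∩ W).powerset).card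
        ≤ ∑ W ∈ 𝒲, ((C ∩ W).powerset).card := Finset.card_biUnion_le
      _ ≤ ∑ _W ∈ 𝒲, 2 ^ (k + l) := by
          refine Finset.sum_le_sum fun W hW => ?_
          rw [Finset.card_powerset]
          exact Nat.pow_le_pow_right (by norm_num) (hCW W hW)
      _ = 𝒲.card * 2 ^ (k + l) := by rw [Finset.sum_const, smul_eq_mul]
      _ ≤ 2 ^ (2 * (k + l)) * 2 ^ (k + l) := Nat.mul_le_mul_right _ hWcard
      _ = 2 ^ (3 * (k + l)) := by rw [← pow_add]; ring_nf
  · intro X hX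
    obtain ⟨W, hW, hXW⟩ := Finset.mem_biUnion.1 hX
    exact (Finset.mem_powerset.1 hXW).trans Finset.inter_subset_left
  · intro V1 hmin hsz hcard'
    obtain ⟨hAV, hBV⟩ := hmin.1
    have hdisj : Disjoint V1 B := by
      rw [Finset.disjoint_left]
      intro a haV haB
      exact Finset.mem_compl.1 (hBV haB) haV
    have hg : Grounded w A V1 := hground V1 hmin
    have hg' : Grounded w' A V1 := by
      intro x hx
      obtain ⟨a, ha, hr⟩ := hg x hx
      exact ⟨a, ha, reach_mono (fun p q hpq =>
        ⟨hpq.1, hpq.2.1, lt_of_lt_of_le hpq.2.2 (hle p q)⟩) hr⟩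
    have hb0V : b0 ∉ V1 := Finset.mem_compl.1 (hBV hb0)
    have hcs : cutSize w' V1 ≤ k + l := le_trans (hcs' V1 hb0V) (by omega)
    obtain ⟨W, hW, hVW⟩ := hWcov V1 hAV hdisj hg' hcs
    refine Finset.mem_biUnion.2 ⟨W, hW, Finset.mem_powerset.2 ?_⟩
    exact Finset.inter_subset_inter (Finset.Subset.refl C) hVW
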